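/- arXiv:1311.4245 — 2 statements merged into one kernel-verified Lean document; each statement's English description precedes it below -/
import Mathlib

section
/- Under the semi-discrete flow, the segment length ε and the angle ν are constant in t: dε/dt = 0 and dν/dt = 0 (hence a and the torsion λ = sin ν/ε are also constant in t). -/
open Matrix

noncomputable section

/-- Euclidean inner product on ℝ³ (written as `Fin 3 → ℝ`). -/
def dot3 (x y : Fin 3 → ℝ) : ℝ := x 0 * y 0 + x 1 * y 1 + x 2 * y 2

/-- Cross product on ℝ³. -/
def cross3 (x y : Fin 3 → ℝ) : Fin 3 → ℝ :=
  ![x 1 * y 2 - x 2 * y 1, x 2 * y 0 - x 0 * y 2, x 0 * y 1 - x 1 * y 0]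

/-- Euclidean norm on ℝ³. -/
def norm3 (x : Fin 3 → ℝ) : ℝ := Real.sqrt (dot3 x x)

/-- Tangent vector T_n = (γ_{n+1} − γ_n)/|γ_{n+1} − γ_n| of a discrete space curve. -/
def dT (γ : ℤ → Fin 3 → ℝ) (n : ℤ) : Fin 3 → ℝ :=
  (norm3 (γ (n + 1) - γ n))⁻¹ • (γ (n + 1) - γ n)

/-- Binormal vector B_n = (T_{n−1} × T_n)/|T_{n−1} × T_n|. -/
def dB (γ : ℤ → Fin 3 → ℝ) (n : ℤ) : Fin 3 → ℝ :=
  (norm3 (cross3 (dT γ (n - 1)) (dT γ n)))⁻¹ • cross3 (dT γ (n - 1)) (dT γ n)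

/-- Principal normal vector N_n = B_n × T_n. -/
def dN (γ : ℤ → Fin 3 → ℝ) (n : ℤ) : Fin 3 → ℝ := cross3 (dB γ n) (dT γ n)

/-! ### Algebraic lemmas for `dot3`, `cross3`, `norm3` -/

section Algebra

variable {x y z w : Fin 3 → ℝ} {c : ℝ}

lemma dot3_comm (x y : Fin 3 → ℝ) : dot3 x y = dot3 y x := by simp [dot3]; ring

lemma dot3_smul_left (c : ℝ) (x y : Fin 3 → ℝ) : dot3 (c • x) y = c * dot3 x y := by
  simp [dot3]; ring
lemma dot3_smul_right (c : ℝ) (x y : Fin 3 → ℝ) : dot3 x (c • y) = c * dot3 x y := by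
  simp [dot3]; ring
lemma dot3_add_left (x y z : Fin 3 → ℝ) : dot3 (x + y) z = dot3 x z + dot3 y z := by
  simp [dot3]; ring
lemma dot3_add_right (x y z : Fin 3 → ℝ) : dot3 x (y + z) = dot3 x y + dot3 x z := by
  simp [dot3]; ring
lemma dot3_sub_left (x y z : Fin 3 → ℝ) : dot3 (x - y) z = dot3 x z - dot3 y z := by
  simp [dot3]; ring
lemma dot3_sub_right (x y z : Fin 3 → ℝ) : dot3 x (y - z) = dot3 x y - dot3 x z := by
  simp [dot3]; ring
lemma dot3_neg_left (x y : Fin 3 → ℝ) : dot3 (-x) y = -dot3 x y := by simp [dot3]; ring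
lemma dot3_neg_right (x y : Fin 3 → ℝ) : dot3 x (-y) = -dot3 x y := by simp [dot3]; ring

lemma cross3_smul_left (c : ℝ) (x y : Fin 3 → ℝ) : cross3 (c • x) y = c • cross3 x y := by
  funext i; fin_cases i <;> simp [cross3] <;> ring
lemma cross3_smul_right (c : ℝ) (x y : Fin 3 → ℝ) : cross3 x (c • y) = c • cross3 x y := by
  funext i; fin_cases i <;> simp [cross3] <;> ring
lemma cross3_add_left (x y z : Fin 3 → ℝ) : cross3 (x + y) z = cross3 x z + cross3 y z := by
  funext i; fin_cases i <;> simp [cross3] <;> ring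
lemma cross3_add_right (x y z : Fin 3 → ℝ) : cross3 x (y + z) = cross3 x y + cross3 x z := by
  funext i; fin_cases i <;> simp [cross3] <;> ring
lemma cross3_sub_left (x y z : Fin 3 → ℝ) : cross3 (x - y) z = cross3 x z - cross3 y z := by
  funext i; fin_cases i <;> simp [cross3] <;> ring
lemma cross3_sub_right (x y z : Fin 3 → ℝ) : cross3 x (y - z) = cross3 x y - cross3 x z := by
  funext i; fin_cases i <;> simp [cross3] <;> ring
lemma cross3_neg_left (x y : Fin 3 → ℝ) : cross3 (-x) y = -cross3 x y := by
  funext i; fin_cases i <;> simp [cross3] <;> ring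
lemma cross3_self (x : Fin 3 → ℝ) : cross3 x x = 0 := by
  funext i; fin_cases i <;> simp [cross3] <;> ring
lemma cross3_zero_right (x : Fin 3 → ℝ) : cross3 x 0 = 0 := by
  funext i; fin_cases i <;> simp [cross3]
lemma cross3_anticomm (x y : Fin 3 → ℝ) : cross3 x y = -cross3 y x := by
  funext i; fin_cases i <;> simp [cross3] <;> ring

lemma dot3_cross_left (x y : Fin 3 → ℝ) : dot3 (cross3 x y) x = 0 := by
  simp [dot3, cross3]; ring
lemma dot3_cross_right (x y : Fin 3 → ℝ) : dot3 (cross3 x y) y = 0 := by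
  simp [dot3, cross3]; ring
lemma dot3_cross_cyclic (x y z : Fin 3 → ℝ) : dot3 x (cross3 y z) = dot3 z (cross3 x y) := by
  simp [dot3, cross3]; ring

/-- Triple product expansion x × (y × z) = ⟨x,z⟩ y − ⟨x,y⟩ z. -/
lemma cross3_cross3 (x y z : Fin 3 → ℝ) :
    cross3 x (cross3 y z) = dot3 x z • y - dot3 x y • z := by
  funext i; fin_cases i <;> simp [cross3, dot3] <;> ring

/-- Lagrange identity. -/
lemma dot3_cross_cross (x y z w : Fin 3 → ℝ) :
    dot3 (cross3 x y) (cross3 z w) = dot3 x z * dot3 y w - dot3 x w * dot3 y z := by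
  simp [dot3, cross3]; ring

/-- Unconditional expansion identity behind orthonormal expansion. -/
lemma expand_raw (B T w : Fin 3 → ℝ) :
    dot3 w (cross3 B T) • cross3 B T =
      (dot3 T T * dot3 B B - dot3 T B ^ 2) • w
        - (dot3 B B * dot3 w T) • T - (dot3 T T * dot3 w B) • B
        + (dot3 T B * dot3 w T) • B + (dot3 T B * dot3 w B) • T := by
  funext i; fin_cases i <;> simp [cross3, dot3] <;> ring

lemma dot3_self_nonneg (x : Fin 3 → ℝ) : 0 ≤ dot3 x x := by
  simp only [dot3]
  nlinarith [mul_self_nonneg (x 0), mul_self_nonneg (x 1), mul_self_nonneg (x 2)]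

lemma norm3_nonneg (x : Fin 3 → ℝ) : 0 ≤ norm3 x := Real.sqrt_nonneg _

lemma norm3_sq (x : Fin 3 → ℝ) : norm3 x ^ 2 = dot3 x x := Real.sq_sqrt (dot3_self_nonneg x)

lemma norm3_eq_zero_iff (x : Fin 3 → ℝ) : norm3 x = 0 ↔ x = 0 := by
  constructor
  · intro h
    have h2 : dot3 x x = 0 := by have := norm3_sq x; rw [h] at this; linarith
    simp only [dot3] at h2
    funext i
    have e0 : x 0 = 0 := by nlinarith [mul_self_nonneg (x 0), mul_self_nonneg (x 1), mul_self_nonneg (x 2)]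
    have e1 : x 1 = 0 := by nlinarith [mul_self_nonneg (x 0), mul_self_nonneg (x 1), mul_self_nonneg (x 2)]
    have e2 : x 2 = 0 := by nlinarith [mul_self_nonneg (x 0), mul_self_nonneg (x 1), mul_self_nonneg (x 2)]
    fin_cases i <;> simpa
  · intro h; subst h; simp [norm3, dot3]

lemma norm3_pos (x : Fin 3 → ℝ) (hx : x ≠ 0) : 0 < norm3 x :=
  lt_of_le_of_ne (norm3_nonneg x) (fun h => hx ((norm3_eq_zero_iff x).1 h.symm))

lemma dot3_self_pos (x : Fin 3 → ℝ) (hx : x ≠ 0) : 0 < dot3 x x := by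
  nlinarith [norm3_sq x, norm3_pos x hx]

lemma dot3_unit (x : Fin 3 → ℝ) (hx : x ≠ 0) :
    dot3 ((norm3 x)⁻¹ • x) ((norm3 x)⁻¹ • x) = 1 := by
  have h := norm3_pos x hx
  rw [dot3_smul_left, dot3_smul_right, ← norm3_sq]
  field_simp

lemma dot3_normalized (x : Fin 3 → ℝ) (hx : x ≠ 0) :
    dot3 ((norm3 x)⁻¹ • x) x = norm3 x := by
  have h := norm3_pos x hx
  rw [dot3_smul_left, ← norm3_sq]
  field_simp

end Algebra

/-! ### Calculus helpers -/

section Calculus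

variable {f g : ℝ → Fin 3 → ℝ} {f' g' : Fin 3 → ℝ} {t : ℝ}

lemma HasDerivAt.dot3' (hf : HasDerivAt f f' t) (hg : HasDerivAt g g' t) :
    HasDerivAt (fun s => dot3 (f s) (g s)) (dot3 f' (g t) + dot3 (f t) g') t := by
  have h0 := ((hasDerivAt_pi.1 hf) 0).mul ((hasDerivAt_pi.1 hg) 0)
  have h1 := ((hasDerivAt_pi.1 hf) 1).mul ((hasDerivAt_pi.1 hg) 1)
  have h2 := ((hasDerivAt_pi.1 hf) 2).mul ((hasDerivAt_pi.1 hg) 2)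
  have h := (h0.add h1).add h2
  simp only [Pi.mul_def, Pi.add_def] at h
  refine h.congr_deriv ?_
  simp only [dot3]; ring

lemma HasDerivAt.cross3' (hf : HasDerivAt f f' t) (hg : HasDerivAt g g' t) :
    HasDerivAt (fun s => cross3 (f s) (g s)) (cross3 f' (g t) + cross3 (f t) g') t := by
  rw [hasDerivAt_pi]
  intro i
  fin_cases i
  · have h := (((hasDerivAt_pi.1 hf) 1).mul ((hasDerivAt_pi.1 hg) 2)).sub
      (((hasDerivAt_pi.1 hf) 2).mul ((hasDerivAt_pi.1 hg) 1))
    simp only [Pi.mul_def, Pi.sub_def] at h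
    convert h using 1 <;> simp [cross3] <;> ring
  · have h := (((hasDerivAt_pi.1 hf) 2).mul ((hasDerivAt_pi.1 hg) 0)).sub
      (((hasDerivAt_pi.1 hf) 0).mul ((hasDerivAt_pi.1 hg) 2))
    simp only [Pi.mul_def, Pi.sub_def] at h
    convert h using 1 <;> simp [cross3] <;> ring
  · have h := (((hasDerivAt_pi.1 hf) 0).mul ((hasDerivAt_pi.1 hg) 1)).sub
      (((hasDerivAt_pi.1 hf) 1).mul ((hasDerivAt_pi.1 hg) 0))
    simp only [Pi.mul_def, Pi.sub_def] at h
    convert h using 1 <;> simp [cross3] <;> ring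

end Calculus
/-! ### Frame geometry of a discrete space curve at a fixed time -/

section Geometry

variable (c : ℤ → Fin 3 → ℝ)

lemma seg_ne (n : ℤ)
    (hcol : ¬ Collinear ℝ ({c (n - 1), c n, c (n + 1)} : Set (Fin 3 → ℝ))) :
    c (n + 1) - c n ≠ 0 := by
  intro h
  apply hcol
  have h1 : c (n + 1) = c n := by rwa [sub_eq_zero] at h
  rw [h1]
  have : ({c (n - 1), c n, c n} : Set (Fin 3 → ℝ)) = {c (n - 1), c n} := by
    simp [Set.insert_comm]
  rw [this]
  exact collinear_pair ℝ _ _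

lemma seg_ne' (n : ℤ)
    (hcol : ¬ Collinear ℝ ({c (n - 1), c n, c (n + 1)} : Set (Fin 3 → ℝ))) :
    c n - c (n - 1) ≠ 0 := by
  intro h
  apply hcol
  have h1 : c n = c (n - 1) := by rwa [sub_eq_zero] at h
  rw [h1, Set.insert_idem]
  exact collinear_pair ℝ _ _

lemma cross_seg_ne (n : ℤ)
    (hcol : ¬ Collinear ℝ ({c (n - 1), c n, c (n + 1)} : Set (Fin 3 → ℝ))) :
    cross3 (c n - c (n - 1)) (c (n + 1) - c n) ≠ 0 := by
  intro h
  apply hcol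
  have ha := seg_ne' c n hcol
  have hmem : c n ∈ ({c (n - 1), c n, c (n + 1)} : Set (Fin 3 → ℝ)) := by simp
  rw [collinear_iff_of_mem hmem]
  refine ⟨c n - c (n - 1), ?_⟩
  intro p hp
  have key : dot3 (c n - c (n - 1)) (c n - c (n - 1)) • (c (n + 1) - c n)
      = dot3 (c n - c (n - 1)) (c (n + 1) - c n) • (c n - c (n - 1)) := by
    have h2 := cross3_cross3 (c n - c (n - 1)) (c n - c (n - 1)) (c (n + 1) - c n)
    rw [h, cross3_zero_right] at h2
    have h3 := h2.symm
    rw [sub_eq_zero] at h3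
    exact h3.symm
  have hd : dot3 (c n - c (n - 1)) (c n - c (n - 1)) ≠ 0 := ne_of_gt (dot3_self_pos _ ha)
  rcases hp with hp | hp | hp
  · refine ⟨-1, ?_⟩
    rw [hp, vadd_eq_add]; module
  · exact ⟨0, by rw [hp]; simp⟩
  · refine ⟨(dot3 (c n - c (n - 1)) (c n - c (n - 1)))⁻¹
      * dot3 (c n - c (n - 1)) (c (n + 1) - c n), ?_⟩
    have hb : ((dot3 (c n - c (n - 1)) (c n - c (n - 1)))⁻¹
        * dot3 (c n - c (n - 1)) (c (n + 1) - c n)) • (c n - c (n - 1))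
        = c (n + 1) - c n := by
      have h4 := congrArg (fun z => (dot3 (c n - c (n - 1)) (c n - c (n - 1)))⁻¹ • z) key
      simp only [smul_smul, inv_mul_cancel₀ hd, one_smul] at h4
      exact h4.symm
    rw [hp, vadd_eq_add, hb]
    abel

variable {c}

/-- Hypothesis bundle: everything we know about the curve at one instant. -/
structure Geo (c : ℤ → Fin 3 → ℝ) (κa : ℤ → ℝ) (νa : ℝ) : Prop where
  hcol : ∀ n, ¬ Collinear ℝ ({c (n - 1), c n, c (n + 1)} : Set (Fin 3 → ℝ))
  hκr : ∀ n, κa n ∈ Set.Ioo 0 Real.pi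
  hκc : ∀ n, dot3 (dT c n) (dT c (n - 1)) = Real.cos (κa n)
  hνc : ∀ n, dot3 (dB c n) (dB c (n - 1)) = Real.cos νa
  hνs : ∀ n, dot3 (dB c n) (dN c (n - 1)) = Real.sin νa

namespace Geo

variable {κa : ℤ → ℝ} {νa : ℝ}

lemma u_ne (G : Geo c κa νa) (n : ℤ) : c (n + 1) - c n ≠ 0 := seg_ne c n (G.hcol n)

lemma X_eq_cross (n : ℤ) : cross3 (dT c (n - 1)) (dT c n)
    = ((norm3 (c n - c (n - 1)))⁻¹ * (norm3 (c (n + 1) - c n))⁻¹)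
      • cross3 (c n - c (n - 1)) (c (n + 1) - c n) := by
  have h1 : dT c (n - 1) = (norm3 (c n - c (n - 1)))⁻¹ • (c n - c (n - 1)) := by
    unfold dT; rw [sub_add_cancel]
  rw [h1]
  unfold dT
  rw [cross3_smul_left, cross3_smul_right, smul_smul]

lemma X_ne (G : Geo c κa νa) (n : ℤ) : cross3 (dT c (n - 1)) (dT c n) ≠ 0 := by
  rw [X_eq_cross n]
  have h1 := seg_ne' c n (G.hcol n)
  have h2 := seg_ne c n (G.hcol n)
  have h3 := cross_seg_ne c n (G.hcol n)
  have p1 := norm3_pos _ h1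
  have p2 := norm3_pos _ h2
  exact smul_ne_zero (by positivity) h3

lemma TT (G : Geo c κa νa) (n : ℤ) : dot3 (dT c n) (dT c n) = 1 := dot3_unit _ (G.u_ne n)

lemma BB (G : Geo c κa νa) (n : ℤ) : dot3 (dB c n) (dB c n) = 1 := dot3_unit _ (G.X_ne n)

lemma BT (n : ℤ) : dot3 (dB c n) (dT c n) = 0 := by
  unfold dB
  rw [dot3_smul_left, dot3_cross_right, mul_zero]

lemma BTm (n : ℤ) : dot3 (dB c n) (dT c (n - 1)) = 0 := by
  unfold dB
  rw [dot3_smul_left, dot3_cross_left, mul_zero]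

lemma NT (n : ℤ) : dot3 (dN c n) (dT c n) = 0 := dot3_cross_right _ _

lemma NB (n : ℤ) : dot3 (dN c n) (dB c n) = 0 := dot3_cross_left _ _

lemma NN (G : Geo c κa νa) (n : ℤ) : dot3 (dN c n) (dN c n) = 1 := by
  unfold dN
  rw [dot3_cross_cross, G.BB n, G.TT n, dot3_comm (dT c n) (dB c n), BT n]
  ring

/-- |T_{n-1} × T_n| = sin κ_n. -/
lemma normX (G : Geo c κa νa) (n : ℤ) :
    norm3 (cross3 (dT c (n - 1)) (dT c n)) = Real.sin (κa n) := by
  have hsq : norm3 (cross3 (dT c (n - 1)) (dT c n)) ^ 2 = Real.sin (κa n) ^ 2 := by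
    rw [norm3_sq, dot3_cross_cross, G.TT (n-1), G.TT n,
      dot3_comm (dT c (n-1)) (dT c n), G.hκc n]
    have := Real.sin_sq_add_cos_sq (κa n)
    nlinarith
  have h1 : 0 ≤ norm3 (cross3 (dT c (n - 1)) (dT c n)) := norm3_nonneg _
  have h2 : 0 < Real.sin (κa n) :=
    Real.sin_pos_of_pos_of_lt_pi (G.hκr n).1 (G.hκr n).2
  nlinarith

lemma sinκ_pos (G : Geo c κa νa) (n : ℤ) : 0 < Real.sin (κa n) :=
  Real.sin_pos_of_pos_of_lt_pi (G.hκr n).1 (G.hκr n).2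

/-- X_n = sin κ_n • B_n. -/
lemma X_eq (G : Geo c κa νa) (n : ℤ) :
    cross3 (dT c (n - 1)) (dT c n) = Real.sin (κa n) • dB c n := by
  unfold dB
  rw [smul_smul, G.normX n, mul_inv_cancel₀ (ne_of_gt (G.sinκ_pos n)), one_smul]

lemma BX (G : Geo c κa νa) (n : ℤ) :
    dot3 (dB c n) (cross3 (dT c (n - 1)) (dT c n)) = Real.sin (κa n) := by
  rw [G.X_eq n, dot3_smul_right, G.BB n, mul_one]

/-- ⟨T_{n-1}, N_n⟩ = −sin κ_n. -/
lemma TmN (G : Geo c κa νa) (n : ℤ) : dot3 (dT c (n - 1)) (dN c n) = -Real.sin (κa n) := by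
  unfold dN
  rw [dot3_cross_cyclic (dT c (n-1)) (dB c n) (dT c n),
    dot3_cross_cyclic (dT c n) (dT c (n-1)) (dB c n),
    cross3_anticomm (dT c n) (dT c (n-1)), dot3_neg_right, G.BX n]

/-- Frame cross product table. -/
lemma TxN (G : Geo c κa νa) (n : ℤ) : cross3 (dT c n) (dN c n) = dB c n := by
  unfold dN
  rw [cross3_cross3, G.TT n, dot3_comm (dT c n) (dB c n), BT n]
  simp

lemma TxB (n : ℤ) : cross3 (dT c n) (dB c n) = -dN c n := by
  rw [cross3_anticomm]; rfl

lemma NxB (G : Geo c κa νa) (n : ℤ) : cross3 (dN c n) (dB c n) = dT c n := by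
  unfold dN
  rw [cross3_anticomm, cross3_cross3, BT n, G.BB n]
  simp

lemma NxT (G : Geo c κa νa) (n : ℤ) : cross3 (dN c n) (dT c n) = -dB c n := by
  rw [cross3_anticomm, G.TxN n]

lemma BxN (G : Geo c κa νa) (n : ℤ) : cross3 (dB c n) (dN c n) = -dT c n := by
  rw [cross3_anticomm, G.NxB n]

lemma BxT (n : ℤ) : cross3 (dB c n) (dT c n) = dN c n := rfl

/-- Orthonormal expansion in the frame (T_n, N_n, B_n). -/
lemma expand (G : Geo c κa νa) (n : ℤ) (w : Fin 3 → ℝ) :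
    w = dot3 w (dT c n) • dT c n + dot3 w (dN c n) • dN c n + dot3 w (dB c n) • dB c n := by
  have h := expand_raw (dB c n) (dT c n) w
  rw [G.TT n, G.BB n, dot3_comm (dT c n) (dB c n), BT n] at h
  have h2 : dot3 w (dN c n) • dN c n = dot3 w (cross3 (dB c n) (dT c n)) • cross3 (dB c n) (dT c n) := rfl
  rw [h2, h]
  funext i
  simp [Pi.add_apply, Pi.sub_apply, Pi.smul_apply]
  ring

end Geo

end Geometry
/-! ### Half-angle lemmas -/

section HalfAngle

variable {κ : ℝ}

lemma tan_half_mul (h : κ ∈ Set.Ioo 0 Real.pi) :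
    Real.tan (κ/2) * (1 + Real.cos κ) = Real.sin κ := by
  have hc : 0 < Real.cos (κ/2) := by
    apply Real.cos_pos_of_mem_Ioo
    constructor
    · nlinarith [Real.pi_pos, h.1]
    · nlinarith [h.2, Real.pi_pos]
  have h1 := Real.cos_two_mul (κ/2)
  have h2 := Real.sin_two_mul (κ/2)
  rw [show 2*(κ/2) = κ by ring] at h1 h2
  rw [Real.tan_eq_sin_div_cos, h1, h2]
  field_simp
  ring

lemma one_add_cos_pos (h : κ ∈ Set.Ioo 0 Real.pi) : 0 < 1 + Real.cos κ := by
  have hc : 0 < Real.cos (κ/2) := by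
    apply Real.cos_pos_of_mem_Ioo
    constructor
    · nlinarith [Real.pi_pos, h.1]
    · nlinarith [h.2, Real.pi_pos]
  have h1 := Real.cos_two_mul (κ/2)
  rw [show 2*(κ/2) = κ by ring] at h1
  nlinarith

/-- cos κ + tan(κ/2) sin κ = 1. -/
lemma cos_add_tan_half_sin (h : κ ∈ Set.Ioo 0 Real.pi) :
    Real.cos κ + Real.tan (κ/2) * Real.sin κ = 1 := by
  have h1 := tan_half_mul h
  have h2 := one_add_cos_pos h
  have h3 := Real.sin_sq_add_cos_sq κ
  have h4 : Real.tan (κ/2) = Real.sin κ / (1 + Real.cos κ) := by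
    field_simp at h1 ⊢
    linarith [h1]
  rw [h4]
  field_simp
  nlinarith

/-- sin κ − tan(κ/2) cos κ = tan(κ/2). -/
lemma sin_sub_tan_half_cos (h : κ ∈ Set.Ioo 0 Real.pi) :
    Real.sin κ - Real.tan (κ/2) * Real.cos κ = Real.tan (κ/2) := by
  have h1 := tan_half_mul h
  linarith

end HalfAngle

/-! ### Frame transitions -/

namespace Geo

variable {c : ℤ → Fin 3 → ℝ} {κa : ℤ → ℝ} {νa : ℝ}

/-- B_{n+1} = sin ν N_n + cos ν B_n. -/
lemma Bp (G : Geo c κa νa) (n : ℤ) :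
    dB c (n + 1) = Real.sin νa • dN c n + Real.cos νa • dB c n := by
  have h := G.expand n (dB c (n+1))
  have hT := BTm (c := c) (n+1)
  rw [add_sub_cancel_right] at hT
  have hN := G.hνs (n+1)
  rw [add_sub_cancel_right] at hN
  have hB := G.hνc (n+1)
  rw [add_sub_cancel_right] at hB
  rw [hT, hN, hB] at h
  rw [h]
  module

/-- T_{n+1} = cos κ_{n+1} T_n + sin κ_{n+1} cos ν N_n − sin κ_{n+1} sin ν B_n. -/
lemma Tp (G : Geo c κa νa) (n : ℤ) :
    dT c (n + 1) = Real.cos (κa (n+1)) • dT c n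
      + (Real.sin (κa (n+1)) * Real.cos νa) • dN c n
      + (-(Real.sin (κa (n+1)) * Real.sin νa)) • dB c n := by
  set a2 := dot3 (dT c (n+1)) (dN c n) with ha2
  set a3 := dot3 (dT c (n+1)) (dB c n) with ha3
  have pyth := Real.sin_sq_add_cos_sq νa
  have e1 : a2 * Real.sin νa + a3 * Real.cos νa = 0 := by
    have hBT := BT (c := c) (n+1)
    rw [G.Bp n] at hBT
    rw [dot3_add_left, dot3_smul_left, dot3_smul_left,
      dot3_comm (dN c n) (dT c (n+1)), dot3_comm (dB c n) (dT c (n+1))] at hBT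
    rw [← ha2, ← ha3] at hBT
    linarith
  have hX : cross3 (dT c n) (dT c (n+1)) = a2 • dB c n - a3 • dN c n := by
    conv_lhs => rw [G.expand n (dT c (n+1))]
    rw [cross3_add_right, cross3_add_right, cross3_smul_right, cross3_smul_right,
      cross3_smul_right, cross3_self, G.TxN n, TxB n]
    rw [← ha2, ← ha3]
    module
  have e2 : a2 * Real.cos νa - a3 * Real.sin νa = Real.sin (κa (n+1)) := by
    have hBX := G.BX (n+1)
    rw [add_sub_cancel_right] at hBX
    rw [G.Bp n, hX] at hBX
    simp only [dot3_add_left, dot3_sub_right, dot3_smul_left, dot3_smul_right] at hBX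
    rw [NB (c := c) n, G.NN n, G.BB n, dot3_comm (dB c n) (dN c n), NB (c := c) n] at hBX
    linarith
  have a2val : a2 = Real.sin (κa (n+1)) * Real.cos νa := by
    linear_combination (Real.sin νa) * e1 + (Real.cos νa) * e2 - a2 * pyth
  have a3val : a3 = -(Real.sin (κa (n+1)) * Real.sin νa) := by
    linear_combination (Real.cos νa) * e1 - (Real.sin νa) * e2 - a3 * pyth
  have h := G.expand n (dT c (n+1))
  have hκ' := G.hκc (n+1)
  rw [add_sub_cancel_right] at hκ'
  rw [← ha2, ← ha3, a2val, a3val, hκ'] at h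
  exact h

/-- N_{n+1} = −sin κ_{n+1} T_n + cos κ_{n+1} cos ν N_n − cos κ_{n+1} sin ν B_n. -/
lemma Np (G : Geo c κa νa) (n : ℤ) :
    dN c (n + 1) = (-Real.sin (κa (n+1))) • dT c n
      + (Real.cos (κa (n+1)) * Real.cos νa) • dN c n
      + (-(Real.cos (κa (n+1)) * Real.sin νa)) • dB c n := by
  have h : dN c (n+1) = cross3 (dB c (n+1)) (dT c (n+1)) := rfl
  rw [h, G.Bp n, G.Tp n]
  rw [cross3_add_left, cross3_smul_left, cross3_smul_left]
  rw [cross3_add_right, cross3_add_right, cross3_smul_right, cross3_smul_right,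
    cross3_smul_right, cross3_add_right, cross3_add_right, cross3_smul_right,
    cross3_smul_right, cross3_smul_right]
  rw [G.NxT n, cross3_self, G.NxB n, BxT (c := c) n, G.BxN n, cross3_self]
  have pyth := Real.sin_sq_add_cos_sq νa
  funext i
  simp only [Pi.add_apply, Pi.smul_apply, Pi.neg_apply, Pi.zero_apply, smul_eq_mul]
  linear_combination (-Real.sin (κa (n+1)) * dT c n i) * pyth

end Geo
namespace Geo

variable {c : ℤ → Fin 3 → ℝ} {κa : ℤ → ℝ} {νa : ℝ}

lemma TN (n : ℤ) : dot3 (dT c n) (dN c n) = 0 := by rw [dot3_comm]; exact NT n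
lemma TB (n : ℤ) : dot3 (dT c n) (dB c n) = 0 := by rw [dot3_comm]; exact BT n
lemma BN (n : ℤ) : dot3 (dB c n) (dN c n) = 0 := by rw [dot3_comm]; exact NB n

lemma Tp' (G : Geo c κa νa) (n : ℤ) :
    dT c n = Real.cos (κa n) • dT c (n-1)
      + (Real.sin (κa n) * Real.cos νa) • dN c (n-1)
      + (-(Real.sin (κa n) * Real.sin νa)) • dB c (n-1) := by
  have h := G.Tp (n-1); rw [sub_add_cancel] at h; exact h

lemma Np' (G : Geo c κa νa) (n : ℤ) :
    dN c n = (-Real.sin (κa n)) • dT c (n-1)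
      + (Real.cos (κa n) * Real.cos νa) • dN c (n-1)
      + (-(Real.cos (κa n) * Real.sin νa)) • dB c (n-1) := by
  have h := G.Np (n-1); rw [sub_add_cancel] at h; exact h

lemma Bp' (G : Geo c κa νa) (n : ℤ) :
    dB c n = Real.sin νa • dN c (n-1) + Real.cos νa • dB c (n-1) := by
  have h := G.Bp (n-1); rw [sub_add_cancel] at h; exact h

lemma TNm (G : Geo c κa νa) (n : ℤ) :
    dot3 (dT c n) (dN c (n-1)) = Real.sin (κa n) * Real.cos νa := by
  conv_lhs => rw [G.Tp' n]
  simp only [dot3_add_left, dot3_smul_left]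
  rw [TN (c := c) (n-1), G.NN (n-1), dot3_comm (dB c (n-1)) (dN c (n-1)), NB (c := c) (n-1)]
  ring

lemma NNm (G : Geo c κa νa) (n : ℤ) :
    dot3 (dN c n) (dN c (n-1)) = Real.cos (κa n) * Real.cos νa := by
  conv_lhs => rw [G.Np' n]
  simp only [dot3_add_left, dot3_smul_left]
  rw [TN (c := c) (n-1), G.NN (n-1), dot3_comm (dB c (n-1)) (dN c (n-1)), NB (c := c) (n-1)]
  ring

lemma TBm (G : Geo c κa νa) (n : ℤ) :
    dot3 (dT c n) (dB c (n-1)) = -(Real.sin (κa n) * Real.sin νa) := by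
  conv_lhs => rw [G.Tp' n]
  simp only [dot3_add_left, dot3_smul_left]
  rw [TB (c := c) (n-1), NB (c := c) (n-1), G.BB (n-1)]
  ring

lemma NBm (G : Geo c κa νa) (n : ℤ) :
    dot3 (dN c n) (dB c (n-1)) = -(Real.cos (κa n) * Real.sin νa) := by
  conv_lhs => rw [G.Np' n]
  simp only [dot3_add_left, dot3_smul_left]
  rw [TB (c := c) (n-1), NB (c := c) (n-1), G.BB (n-1)]
  ring

/-- T_{n-1} in the frame at n. -/
lemma Tm_ex (G : Geo c κa νa) (n : ℤ) :
    dT c (n-1) = Real.cos (κa n) • dT c n - Real.sin (κa n) • dN c n := by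
  have h := G.expand n (dT c (n-1))
  rw [dot3_comm (dT c (n-1)) (dT c n), G.hκc n, G.TmN n,
    dot3_comm (dT c (n-1)) (dB c n), BTm (c := c) n] at h
  rw [h]; module

/-- N_{n-1} in the frame at n. -/
lemma Nm_ex (G : Geo c κa νa) (n : ℤ) :
    dN c (n-1) = (Real.sin (κa n) * Real.cos νa) • dT c n
      + (Real.cos (κa n) * Real.cos νa) • dN c n + Real.sin νa • dB c n := by
  have h := G.expand n (dN c (n-1))
  rw [dot3_comm (dN c (n-1)) (dT c n), G.TNm n,
    dot3_comm (dN c (n-1)) (dN c n), G.NNm n,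
    dot3_comm (dN c (n-1)) (dB c n), G.hνs n] at h
  exact h

/-- B_{n-1} in the frame at n. -/
lemma Bm_ex (G : Geo c κa νa) (n : ℤ) :
    dB c (n-1) = (-(Real.sin (κa n) * Real.sin νa)) • dT c n
      + (-(Real.cos (κa n) * Real.sin νa)) • dN c n + Real.cos νa • dB c n := by
  have h := G.expand n (dB c (n-1))
  rw [dot3_comm (dB c (n-1)) (dT c n), G.TBm n,
    dot3_comm (dB c (n-1)) (dN c n), G.NBm n,
    dot3_comm (dB c (n-1)) (dB c n), G.hνc n] at h
  exact h

end Geo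

/-! ### The flow vector field -/

/-- The velocity of the flow at vertex `n`. -/
def flowV (c : ℤ → Fin 3 → ℝ) (κa : ℤ → ℝ) (νa ra : ℝ) (n : ℤ) : Fin 3 → ℝ :=
  ra • (Real.cos νa • dT c n - (Real.cos νa * Real.tan (κa n / 2)) • dN c n
    + (Real.sin νa * Real.tan (κa n / 2)) • dB c n)

namespace Geo

variable {c : ℤ → Fin 3 → ℝ} {κa : ℤ → ℝ} {νa : ℝ}

/-- v_{n+1} − v_n in the frame at n. -/
lemma flow_diff (G : Geo c κa νa) (ra : ℝ) (n : ℤ) :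
    flowV c κa νa ra (n+1) - flowV c κa νa ra n
      = (ra * (Real.tan (κa (n+1)/2) + Real.cos νa * Real.tan (κa n/2))) • dN c n
        + (-(ra * Real.sin νa * Real.tan (κa n/2))) • dB c n := by
  have klem1 := cos_add_tan_half_sin (G.hκr (n+1))
  have klem2 := sin_sub_tan_half_cos (G.hκr (n+1))
  have pyth := Real.sin_sq_add_cos_sq νa
  unfold flowV
  rw [G.Tp n, G.Np n, G.Bp n]
  funext i
  simp only [Pi.add_apply, Pi.sub_apply, Pi.smul_apply, Pi.neg_apply, smul_eq_mul]
  linear_combination (ra * Real.cos νa * dT c n i) * klem1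
    + (ra * Real.cos νa ^ 2 * dN c n i) * klem2
    + (ra * Real.tan (κa (n+1)/2) * dN c n i) * pyth
    + (-(ra * Real.sin νa * Real.cos νa * dB c n i)) * klem2

/-- ⟨v_{n+1} − v_n, T_n⟩ = 0 : the edge length is preserved. -/
lemma flow_dot_T (G : Geo c κa νa) (ra : ℝ) (n : ℤ) :
    dot3 (flowV c κa νa ra (n+1) - flowV c κa νa ra n) (dT c n) = 0 := by
  rw [G.flow_diff ra n]
  rw [dot3_add_left, dot3_smul_left, dot3_smul_left, NT (c := c) n, BT (c := c) n]
  ring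

end Geo
namespace Geo

variable {c : ℤ → Fin 3 → ℝ} {κa : ℤ → ℝ} {νa : ℝ}

/-- Shape of X' = W_{n-1} × T_n + T_{n-1} × W_n in the frame at n. -/
lemma Xd_form (G : Geo c κa νa) (n : ℤ) (w1 w2 v1 v2 : ℝ) :
    cross3 (w1 • dN c (n-1) + w2 • dB c (n-1)) (dT c n)
      + cross3 (dT c (n-1)) (v1 • dN c n + v2 • dB c n)
    = (-(Real.sin (κa n) * v2)) • dT c n
      + (w1 * Real.sin νa + w2 * Real.cos νa - Real.cos (κa n) * v2) • dN c n
      + (Real.cos (κa n) * (v1 - w1 * Real.cos νa + w2 * Real.sin νa)) • dB c n := by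
  rw [G.Nm_ex n, G.Bm_ex n, G.Tm_ex n]
  simp only [cross3_add_left, cross3_add_right, cross3_sub_left, cross3_sub_right,
    cross3_smul_left, cross3_smul_right, smul_add, smul_sub, smul_smul]
  rw [cross3_self, G.NxT n, BxT (c := c) n, G.TxN n, TxB (c := c) n, cross3_self, G.NxB n]
  funext i
  simp only [Pi.add_apply, Pi.sub_apply, Pi.smul_apply, Pi.neg_apply, Pi.zero_apply,
    smul_eq_mul]
  ring

/-- Shape of B' given X' = α T + β N + δ B. -/
lemma Bd_form (G : Geo c κa νa) (n : ℤ) (α β δ : ℝ) :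
    (Real.sqrt (dot3 (cross3 (dT c (n-1)) (dT c n)) (cross3 (dT c (n-1)) (dT c n))))⁻¹
        • (α • dT c n + β • dN c n + δ • dB c n)
      + (-(1 / (2 * Real.sqrt (dot3 (cross3 (dT c (n-1)) (dT c n)) (cross3 (dT c (n-1)) (dT c n)))) *
            (dot3 (α • dT c n + β • dN c n + δ • dB c n) (cross3 (dT c (n-1)) (dT c n))
              + dot3 (cross3 (dT c (n-1)) (dT c n)) (α • dT c n + β • dN c n + δ • dB c n)))
          / Real.sqrt (dot3 (cross3 (dT c (n-1)) (dT c n)) (cross3 (dT c (n-1)) (dT c n))) ^ 2)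
        • cross3 (dT c (n-1)) (dT c n)
    = (α / Real.sin (κa n)) • dT c n + (β / Real.sin (κa n)) • dN c n := by
  have hs : Real.sqrt (dot3 (cross3 (dT c (n-1)) (dT c n)) (cross3 (dT c (n-1)) (dT c n)))
      = Real.sin (κa n) := by
    rw [show Real.sqrt (dot3 (cross3 (dT c (n-1)) (dT c n)) (cross3 (dT c (n-1)) (dT c n)))
      = norm3 (cross3 (dT c (n-1)) (dT c n)) from rfl, G.normX n]
  have hd1 : dot3 (α • dT c n + β • dN c n + δ • dB c n) (cross3 (dT c (n-1)) (dT c n))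
      = δ * Real.sin (κa n) := by
    rw [G.X_eq n]
    simp only [dot3_add_left, dot3_smul_left, dot3_smul_right]
    rw [TB (c := c) n, NB (c := c) n, G.BB n]
    ring
  have hd2 : dot3 (cross3 (dT c (n-1)) (dT c n)) (α • dT c n + β • dN c n + δ • dB c n)
      = δ * Real.sin (κa n) := by
    rw [G.X_eq n]
    simp only [dot3_add_right, dot3_smul_left, dot3_smul_right]
    rw [BT (c := c) n, BN (c := c) n, G.BB n]
    ring
  rw [hs, hd1, hd2, G.X_eq n]
  have hκ := ne_of_gt (G.sinκ_pos n)
  match_scalars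
  · field_simp
  · field_simp
  · field_simp; ring

/-- Shape of N' = B' × T + B × W. -/
lemma Nd_form (G : Geo c κa νa) (n : ℤ) (p1 p2 v1 v2 : ℝ) :
    cross3 (p1 • dT c n + p2 • dN c n) (dT c n) + cross3 (dB c n) (v1 • dN c n + v2 • dB c n)
    = (-v1) • dT c n + (-p2) • dB c n := by
  simp only [cross3_add_left, cross3_add_right, cross3_smul_left, cross3_smul_right]
  rw [cross3_self, G.NxT n, G.BxN n, cross3_self]
  funext i
  simp only [Pi.add_apply, Pi.smul_apply, Pi.neg_apply, Pi.zero_apply, smul_eq_mul]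
  ring

end Geo
/-! ### The main theorem -/

/-- Under the semi-discrete flow, the segment length ε and the angle ν are constant
in t (hence a and the torsion λ = sin ν / ε are also constant in t). -/
theorem statement9
    (γ : ℝ → ℤ → Fin 3 → ℝ) (ε ν : ℝ → ℝ) (κ : ℝ → ℤ → ℝ) (a : ℝ → ℝ)
    (hcurve : ∀ t n, ¬ Collinear ℝ ({γ t (n - 1), γ t n, γ t (n + 1)} : Set (Fin 3 → ℝ)))
    (hε : ∀ t n, norm3 (γ t (n + 1) - γ t n) = ε t)
    (hν : ∀ t, ν t ∈ Set.Ico (-Real.pi) Real.pi)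
    (hνcos : ∀ t n, dot3 (dB (γ t) n) (dB (γ t) (n - 1)) = Real.cos (ν t))
    (hνsin : ∀ t n, dot3 (dB (γ t) n) (dN (γ t) (n - 1)) = Real.sin (ν t))
    (hκ : ∀ t n, κ t n ∈ Set.Ioo 0 Real.pi)
    (hκcos : ∀ t n, dot3 (dT (γ t) n) (dT (γ t) (n - 1)) = Real.cos (κ t n))
    (ha : ∀ t, a t = (1 + Real.tan (ν t / 2) ^ 2) * ε t)
    (hflow : ∀ t n, HasDerivAt (fun s => γ s n)
      ((ε t / a t) • (Real.cos (ν t) • dT (γ t) n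
        - (Real.cos (ν t) * Real.tan (κ t n / 2)) • dN (γ t) n
        + (Real.sin (ν t) * Real.tan (κ t n / 2)) • dB (γ t) n)) t) :
    (∀ t, HasDerivAt ε 0 t) ∧ (∀ t, HasDerivAt ν 0 t) ∧
    (∀ t, HasDerivAt a 0 t) ∧
    (∀ t, HasDerivAt (fun s => Real.sin (ν s) / ε s) 0 t) := by
  have hG : ∀ t, Geo (γ t) (κ t) (ν t) := fun t => ⟨hcurve t, hκ t, hκcos t, hνcos t, hνsin t⟩
  have hεpos : ∀ t, 0 < ε t := fun t => by
    rw [← hε t 0]; exact norm3_pos _ ((hG t).u_ne 0)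
  have hflow' : ∀ t n, HasDerivAt (fun s => γ s n)
      (flowV (γ t) (κ t) (ν t) (ε t / a t) n) t := fun t n => hflow t n
  have hu : ∀ t n, HasDerivAt (fun s => γ s (n+1) - γ s n)
      (flowV (γ t) (κ t) (ν t) (ε t / a t) (n+1) - flowV (γ t) (κ t) (ν t) (ε t / a t) n) t :=
    fun t n => (hflow' t (n+1)).sub (hflow' t n)
  have hu_eq : ∀ t n, γ t (n+1) - γ t n = ε t • dT (γ t) n := by
    intro t n
    unfold dT
    rw [hε t n, smul_smul, mul_inv_cancel₀ (ne_of_gt (hεpos t)), one_smul]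
  have hq0 : ∀ t n, HasDerivAt (fun s => dot3 (γ s (n+1) - γ s n) (γ s (n+1) - γ s n)) 0 t := by
    intro t n
    have h := (hu t n).dot3' (hu t n)
    convert h using 1
    rw [hu_eq t n, dot3_smul_right, dot3_smul_left,
      dot3_comm (dT (γ t) n), (hG t).flow_dot_T (ε t / a t) n]
    ring
  have hεd : ∀ t, HasDerivAt ε 0 t := by
    intro t
    have hfun : ε = fun s => norm3 (γ s (0+1) - γ s 0) := funext fun s => (hε s 0).symm
    rw [hfun]
    have hne : dot3 (γ t (0+1) - γ t 0) (γ t (0+1) - γ t 0) ≠ 0 :=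
      ne_of_gt (dot3_self_pos _ ((hG t).u_ne 0))
    have h := (Real.hasDerivAt_sqrt hne).comp t (hq0 t 0)
    simp only [mul_zero] at h
    exact h
  have hninv : ∀ t n, HasDerivAt (fun s => (norm3 (γ s (n+1) - γ s n))⁻¹) 0 t := by
    intro t n
    have hfun : (fun s => norm3 (γ s (n+1) - γ s n)) = ε := funext fun s => hε s n
    have h1 : HasDerivAt (fun s => norm3 (γ s (n+1) - γ s n)) 0 t := by
      rw [hfun]; exact hεd t
    have h2 := h1.inv (by rw [hε t n]; exact ne_of_gt (hεpos t))
    simpa [Pi.inv_def] using h2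
  have hTd : ∀ t n, HasDerivAt (fun s => dT (γ s) n)
      ((ε t)⁻¹ • (flowV (γ t) (κ t) (ν t) (ε t / a t) (n+1)
        - flowV (γ t) (κ t) (ν t) (ε t / a t) n)) t := by
    intro t n
    have h := (hninv t n).smul (hu t n)
    simp only [zero_smul, add_zero] at h
    rw [hε t n] at h
    exact h
  have hW_eq : ∀ t n, (ε t)⁻¹ • (flowV (γ t) (κ t) (ν t) (ε t / a t) (n+1)
        - flowV (γ t) (κ t) (ν t) (ε t / a t) n)
      = ((ε t)⁻¹ * ((ε t / a t) * (Real.tan (κ t (n+1)/2)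
          + Real.cos (ν t) * Real.tan (κ t n/2)))) • dN (γ t) n
        + ((ε t)⁻¹ * (-((ε t / a t) * Real.sin (ν t) * Real.tan (κ t n/2)))) • dB (γ t) n := by
    intro t n
    rw [(hG t).flow_diff (ε t / a t) n, smul_add, smul_smul, smul_smul]
  have hTdF : ∀ t n, HasDerivAt (fun s => dT (γ s) n)
      (((ε t)⁻¹ * ((ε t / a t) * (Real.tan (κ t (n+1)/2)
          + Real.cos (ν t) * Real.tan (κ t n/2)))) • dN (γ t) n
        + ((ε t)⁻¹ * (-((ε t / a t) * Real.sin (ν t) * Real.tan (κ t n/2)))) • dB (γ t) n) t := by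
    intro t n
    rw [← hW_eq t n]
    exact hTd t n
  -- derivative of the binormal
  have hBd : ∀ t n, HasDerivAt (fun s => dB (γ s) n)
      ((((ε t)⁻¹ * (ε t / a t) * Real.sin (ν t)) * Real.tan (κ t n / 2)) • dT (γ t) n
        + ((ε t)⁻¹ * (ε t / a t) * Real.sin (ν t)) • dN (γ t) n) t := by
    intro t n
    have h1 := hTdF t (n-1)
    rw [sub_add_cancel] at h1
    have hX := h1.cross3' (hTdF t n)
    rw [(hG t).Xd_form n _ _ _ _] at hX
    have hq := hX.dot3' hX
    have hne : dot3 (cross3 (dT (γ t) (n-1)) (dT (γ t) n)) (cross3 (dT (γ t) (n-1)) (dT (γ t) n)) ≠ 0 :=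
      ne_of_gt (dot3_self_pos _ ((hG t).X_ne n))
    have hs := (Real.hasDerivAt_sqrt hne).comp t hq
    simp only [Function.comp_def] at hs
    have hsν : Real.sqrt (dot3 (cross3 (dT (γ t) (n-1)) (dT (γ t) n))
        (cross3 (dT (γ t) (n-1)) (dT (γ t) n))) = Real.sin (κ t n) := (hG t).normX n
    have hnz : Real.sqrt (dot3 (cross3 (dT (γ t) (n-1)) (dT (γ t) n))
        (cross3 (dT (γ t) (n-1)) (dT (γ t) n))) ≠ 0 := by
      rw [hsν]; exact ne_of_gt ((hG t).sinκ_pos n)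
    have hi := hs.inv hnz
    simp only [Pi.inv_def] at hi
    have hmul := hi.smul hX
    rw [(hG t).Bd_form n _ _ _] at hmul
    refine hmul.congr_deriv ?_
    symm
    have hκ3 := tan_half_mul (hκ t n)
    have hκne := ne_of_gt ((hG t).sinκ_pos n)
    match_scalars
    · rw [mul_one, mul_one, eq_div_iff hκne]
      ring
    · field_simp
      linear_combination (-((ε t)⁻¹ * (ε t / a t) * Real.sin (ν t))) * hκ3
  -- derivative of the principal normal
  have hNd : ∀ t n, HasDerivAt (fun s => dN (γ s) n)
      ((-((ε t)⁻¹ * ((ε t / a t) * (Real.tan (κ t (n+1)/2)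
          + Real.cos (ν t) * Real.tan (κ t n/2))))) • dT (γ t) n
        + (-((ε t)⁻¹ * (ε t / a t) * Real.sin (ν t))) • dB (γ t) n) t := by
    intro t n
    have h := (hBd t n).cross3' (hTdF t n)
    rw [(hG t).Nd_form n _ _ _ _] at h
    exact h
  -- the derivative of cos ν vanishes
  have hcosd : ∀ t, HasDerivAt (fun s => dot3 (dB (γ s) 0) (dB (γ s) (0-1))) 0 t := by
    intro t
    have h := (hBd t 0).dot3' (hBd t (0-1))
    convert h using 1
    simp only [dot3_add_left, dot3_add_right, dot3_smul_left, dot3_smul_right]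
    rw [(hG t).TBm 0, (hG t).NBm 0, Geo.BTm (c := γ t) 0, (hG t).hνs 0]
    have hκ1 := cos_add_tan_half_sin (hκ t 0)
    linear_combination ((ε t)⁻¹ * (ε t / a t) * Real.sin (ν t) * Real.sin (ν t)) * hκ1
  -- the derivative of sin ν vanishes
  have hsind : ∀ t, HasDerivAt (fun s => dot3 (dB (γ s) 0) (dN (γ s) (0-1))) 0 t := by
    intro t
    have h := (hBd t 0).dot3' (hNd t (0-1))
    convert h using 1
    simp only [dot3_add_left, dot3_add_right, dot3_smul_left, dot3_smul_right]
    rw [(hG t).TNm 0, (hG t).NNm 0, Geo.BTm (c := γ t) 0, (hG t).hνc 0]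
    have hκ1 := cos_add_tan_half_sin (hκ t 0)
    linear_combination (-((ε t)⁻¹ * (ε t / a t) * Real.sin (ν t) * Real.cos (ν t))) * hκ1
  -- cos ∘ ν and sin ∘ ν are constant
  have hcosconst : ∀ s t : ℝ, Real.cos (ν s) = Real.cos (ν t) := by
    have hfun : (fun u => dot3 (dB (γ u) 0) (dB (γ u) (0-1))) = fun u => Real.cos (ν u) :=
      funext fun u => hνcos u 0
    have hdiff : Differentiable ℝ (fun u => Real.cos (ν u)) := by
      rw [← hfun]; exact fun u => (hcosd u).differentiableAt
    have hderiv : ∀ u, deriv (fun u => Real.cos (ν u)) u = 0 := by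
      intro u; rw [← hfun]; exact (hcosd u).deriv
    exact is_const_of_deriv_eq_zero hdiff hderiv
  have hsinconst : ∀ s t : ℝ, Real.sin (ν s) = Real.sin (ν t) := by
    have hfun : (fun u => dot3 (dB (γ u) 0) (dN (γ u) (0-1))) = fun u => Real.sin (ν u) :=
      funext fun u => hνsin u 0
    have hdiff : Differentiable ℝ (fun u => Real.sin (ν u)) := by
      rw [← hfun]; exact fun u => (hsind u).differentiableAt
    have hderiv : ∀ u, deriv (fun u => Real.sin (ν u)) u = 0 := by
      intro u; rw [← hfun]; exact (hsind u).deriv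
    exact is_const_of_deriv_eq_zero hdiff hderiv
  -- hence ν is constant
  have hνconst : ∀ s t : ℝ, ν s = ν t := by
    intro s t
    have h1 : Real.cos (ν s - ν t) = 1 := by
      rw [Real.cos_sub, hcosconst s t, hsinconst s t]
      have := Real.sin_sq_add_cos_sq (ν t)
      nlinarith
    rcases (Real.cos_eq_one_iff _).1 h1 with ⟨m, hm⟩
    have hs := hν s
    have ht := hν t
    have hpi := Real.pi_pos
    have h2 : |ν s - ν t| < 2*Real.pi := by
      rcases abs_cases (ν s - ν t) with ⟨h4, _⟩ | ⟨h4, _⟩ <;>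
        (rw [h4]; cases hs; cases ht; linarith)
    have h3 : |(m:ℝ)| < 1 := by
      have h4 : |(m:ℝ)| * (2*Real.pi) < 2*Real.pi := by
        calc |(m:ℝ)| * (2*Real.pi) = |(m:ℝ) * (2*Real.pi)| := by
              rw [abs_mul, abs_of_pos (by positivity : (0:ℝ) < 2*Real.pi)]
          _ = |ν s - ν t| := by rw [hm]
          _ < 2*Real.pi := h2
      nlinarith [abs_nonneg ((m:ℝ))]
    have hm0 : m = 0 := by
      have h5 := abs_lt.1 h3
      have h6 : (-1:ℝ) < (m:ℤ) := by exact_mod_cast h5.1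
      have h7 : ((m:ℤ):ℝ) < 1 := by exact_mod_cast h5.2
      have h8 : (-1:ℤ) < m := by exact_mod_cast h6
      have h9 : m < 1 := by exact_mod_cast h7
      omega
    have : ν s - ν t = 0 := by rw [← hm, hm0]; simp
    linarith
  have hεconst : ∀ s t : ℝ, ε s = ε t :=
    is_const_of_deriv_eq_zero (fun u => (hεd u).differentiableAt) (fun u => (hεd u).deriv)
  refine ⟨hεd, ?_, ?_, ?_⟩
  · intro t
    have hfun : ν = fun _ => ν t := funext fun s => hνconst s t
    rw [hfun]
    exact hasDerivAt_const _ _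
  · intro t
    have hfun : a = fun _ => a t := funext fun s => by
      rw [ha s, ha t, hνconst s t, hεconst s t]
    rw [hfun]
    exact hasDerivAt_const _ _
  · intro t
    have hfun : (fun s => Real.sin (ν s) / ε s) = fun _ => Real.sin (ν t) / ε t :=
      funext fun s => by rw [hνconst s t, hεconst s t]
    rw [hfun]
    exact hasDerivAt_const _ _
end
end

section
/- (Discrete curves on the sphere and constant-torsion discrete space curves) Let λ ≠ 0 and let Γ : ℤ → ℝ³ be a discrete curve with |Γ_n| = 1/|λ| for all n, such that consecutive points Γ_{n−1}, Γ_n are linearly independent and ⟨Γ_{n−1} × Γ_n, Γ_{n+1}⟩ is nonzero with the same sign for all n. Define γ : ℤ → ℝ³ by γ_{n+1} − γ_n = λ·(Γ_{n+1} × Γ_n). Then γ is a discrete space curve, with |γ_{n+1} − γ_n| = sin ξ_{n+1}/|λ| where ξ_{n+1} ∈ (0,π) is the angle between Γ_n and Γ_{n+1}, and the torsion of γ satisfies sin ν_{n+1}/ε_n = λ for all n, i.e. γ has constant torsion λ. -/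
open Matrix

noncomputable section

namespace S19Aux

lemma dot3_comm (x y : Fin 3 → ℝ) : dot3 x y = dot3 y x := by unfold dot3; ring
lemma dot3_zero_left (y : Fin 3 → ℝ) : dot3 0 y = 0 := by simp [dot3]
lemma dot3_smul_left (t : ℝ) (x y : Fin 3 → ℝ) : dot3 (t • x) y = t * dot3 x y := by
  simp [dot3]; ring
lemma dot3_smul_right (t : ℝ) (x y : Fin 3 → ℝ) : dot3 x (t • y) = t * dot3 x y := by
  simp [dot3]; ring
lemma dot3_sub_right (x y z : Fin 3 → ℝ) : dot3 x (y - z) = dot3 x y - dot3 x z := by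
  simp [dot3]; ring
lemma cross3_smul_left (t : ℝ) (x y : Fin 3 → ℝ) : cross3 (t • x) y = t • cross3 x y := by
  funext i; fin_cases i <;> simp [cross3] <;> ring
lemma cross3_smul_right (t : ℝ) (x y : Fin 3 → ℝ) : cross3 x (t • y) = t • cross3 x y := by
  funext i; fin_cases i <;> simp [cross3] <;> ring
lemma cross3_self (v : Fin 3 → ℝ) : cross3 v v = 0 := by
  funext i; fin_cases i <;> simp [cross3] <;> ring
lemma cross3_anticomm (x y : Fin 3 → ℝ) : cross3 x y = - cross3 y x := by
  funext i; fin_cases i <;> simp [cross3] <;> ring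
lemma cross3_cross3 (x y z : Fin 3 → ℝ) :
    cross3 x (cross3 y z) = dot3 x z • y - dot3 x y • z := by
  funext i; fin_cases i <;> simp [cross3, dot3] <;> ring
lemma dot3_cross_left (x y : Fin 3 → ℝ) : dot3 (cross3 x y) x = 0 := by
  simp [cross3, dot3]; ring
lemma dot3_cross_right (x y : Fin 3 → ℝ) : dot3 (cross3 x y) y = 0 := by
  simp [cross3, dot3]; ring
lemma dot3_cross_swap13 (x y z : Fin 3 → ℝ) :
    dot3 (cross3 x y) z = - dot3 (cross3 z y) x := by simp [cross3, dot3]; ring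
lemma dot3_cross_swap12 (x y z : Fin 3 → ℝ) :
    dot3 (cross3 x y) z = - dot3 (cross3 y x) z := by simp [cross3, dot3]; ring
lemma lagrange (x y : Fin 3 → ℝ) :
    dot3 (cross3 x y) (cross3 x y) = dot3 x x * dot3 y y - dot3 x y ^ 2 := by
  simp [cross3, dot3]; ring
lemma dot3_self_nonneg (x : Fin 3 → ℝ) : 0 ≤ dot3 x x := by
  unfold dot3
  nlinarith [mul_self_nonneg (x 0), mul_self_nonneg (x 1), mul_self_nonneg (x 2)]
lemma dot3_self_pos {x : Fin 3 → ℝ} (h : x ≠ 0) : 0 < dot3 x x := by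
  have h' : x 0 ≠ 0 ∨ x 1 ≠ 0 ∨ x 2 ≠ 0 := by
    by_contra hc
    push_neg at hc
    exact h (funext fun i => by fin_cases i <;> simp [hc.1, hc.2.1, hc.2.2])
  unfold dot3
  rcases h' with h | h | h <;>
    nlinarith [mul_self_pos.mpr h, mul_self_nonneg (x 0), mul_self_nonneg (x 1),
      mul_self_nonneg (x 2)]
lemma sq_norm3 (x : Fin 3 → ℝ) : norm3 x ^ 2 = dot3 x x := Real.sq_sqrt (dot3_self_nonneg x)
lemma norm3_pos {x : Fin 3 → ℝ} (h : x ≠ 0) : 0 < norm3 x :=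
  Real.sqrt_pos.mpr (dot3_self_pos h)
lemma norm3_smul (t : ℝ) (x : Fin 3 → ℝ) : norm3 (t • x) = |t| * norm3 x := by
  unfold norm3
  rw [show dot3 (t • x) (t • x) = t ^ 2 * dot3 x x by
      rw [dot3_smul_left, dot3_smul_right]; ring,
    Real.sqrt_mul (sq_nonneg t), Real.sqrt_sq_eq_abs]

theorem key (lam σ : ℝ) (hlam : lam ≠ 0) (hσ : σ = 1 ∨ σ = -1)
    (Γ : ℤ → Fin 3 → ℝ)
    (hr : ∀ n, dot3 (Γ n) (Γ n) = 1 / lam ^ 2)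
    (hs : ∀ n, 0 < σ * dot3 (cross3 (Γ (n - 1)) (Γ n)) (Γ (n + 1)))
    (γ : ℤ → Fin 3 → ℝ)
    (hγ : ∀ n, γ (n + 1) - γ n = lam • cross3 (Γ (n + 1)) (Γ n)) :
    (∀ n, ¬ Collinear ℝ ({γ (n - 1), γ n, γ (n + 1)} : Set (Fin 3 → ℝ))) ∧
    (∀ n, Real.arccos (lam ^ 2 * dot3 (Γ n) (Γ (n + 1))) ∈ Set.Ioo 0 Real.pi ∧
      norm3 (γ (n + 1) - γ n) =
        Real.sin (Real.arccos (lam ^ 2 * dot3 (Γ n) (Γ (n + 1)))) / |lam|) ∧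
    (∀ n, dot3 (dB γ (n + 1)) (dN γ n) / norm3 (γ (n + 1) - γ n) = lam) := by
  have hσ2 : σ * σ = 1 := by rcases hσ with h | h <;> rw [h] <;> ring
  have hσabs : |σ| = 1 := by rcases hσ with h | h <;> simp [h]
  have hlam2 : (0:ℝ) < lam ^ 2 := by positivity
  have habs : (0:ℝ) < |lam| := abs_pos.mpr hlam
  have hΓne : ∀ n, Γ n ≠ 0 := by
    intro n h
    have h1 := hr n
    rw [h, dot3_zero_left] at h1
    have h2 : (0:ℝ) < 1 / lam ^ 2 := by positivity
    linarith [h1.symm.le]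
  have hnΓ : ∀ n, norm3 (Γ n) = 1 / |lam| := by
    intro n
    unfold norm3
    rw [hr n, show (1:ℝ) / lam ^ 2 = (1 / |lam|) ^ 2 by rw [div_pow, one_pow, sq_abs],
      Real.sqrt_sq (by positivity)]
  have hsne : ∀ n, dot3 (cross3 (Γ (n - 1)) (Γ n)) (Γ (n + 1)) ≠ 0 := by
    intro n h
    have := hs n
    rw [h, mul_zero] at this
    exact lt_irrefl _ this
  have hcne : ∀ n, cross3 (Γ n) (Γ (n + 1)) ≠ 0 := by
    intro n h
    apply hsne (n + 1)
    rw [show n + 1 - 1 = n from by ring, h, dot3_zero_left]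
  have hcne' : ∀ n, cross3 (Γ (n + 1)) (Γ n) ≠ 0 := by
    intro n h
    apply hcne n
    rw [cross3_anticomm, h, neg_zero]
  have hε : ∀ n, 0 < norm3 (γ (n + 1) - γ n) := by
    intro n
    rw [hγ n]
    exact norm3_pos (smul_ne_zero hlam (hcne' n))
  have hεsq : ∀ n, norm3 (γ (n + 1) - γ n) ^ 2
      = 1 / lam ^ 2 - lam ^ 2 * dot3 (Γ n) (Γ (n + 1)) ^ 2 := by
    intro n
    rw [sq_norm3, hγ n, dot3_smul_left, dot3_smul_right, lagrange, hr n, hr (n + 1),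
      dot3_comm (Γ (n + 1))]
    field_simp
  have hT : ∀ n, dT γ n
      = ((norm3 (γ (n + 1) - γ n))⁻¹ * lam) • cross3 (Γ (n + 1)) (Γ n) := by
    intro n
    rw [dT, hγ n, smul_smul]
  have hT' : ∀ n, dT γ (n - 1)
      = ((norm3 (γ n - γ (n - 1)))⁻¹ * lam) • cross3 (Γ n) (Γ (n - 1)) := by
    intro n
    have h := hT (n - 1)
    rwa [show n - 1 + 1 = n from by ring] at h
  have hcT : ∀ n, cross3 (dT γ (n - 1)) (dT γ n)
      = (((norm3 (γ n - γ (n - 1)))⁻¹ * lam) * ((norm3 (γ (n + 1) - γ n))⁻¹ * lam)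
          * dot3 (cross3 (Γ (n - 1)) (Γ n)) (Γ (n + 1))) • Γ n := by
    intro n
    rw [hT' n, hT n, cross3_smul_left, cross3_smul_right, cross3_cross3, dot3_cross_left,
      dot3_cross_swap12]
    funext i
    simp [Pi.smul_apply]
    ring
  have hB : ∀ n, dB γ n = (σ * |lam|) • Γ n := by
    intro n
    have hεn : 0 < norm3 (γ (n + 1) - γ n) := hε n
    have hεp : 0 < norm3 (γ n - γ (n - 1)) := by
      have h := hε (n - 1)
      rwa [show n - 1 + 1 = n from by ring] at h
    set t := ((norm3 (γ n - γ (n - 1)))⁻¹ * lam) * ((norm3 (γ (n + 1) - γ n))⁻¹ * lam)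
        * dot3 (cross3 (Γ (n - 1)) (Γ n)) (Γ (n + 1)) with ht
    have htpos : 0 < σ * t := by
      have h1 : 0 < (norm3 (γ n - γ (n - 1)))⁻¹ * lam * ((norm3 (γ (n + 1) - γ n))⁻¹ * lam) := by
        rw [show (norm3 (γ n - γ (n - 1)))⁻¹ * lam * ((norm3 (γ (n + 1) - γ n))⁻¹ * lam)
            = lam ^ 2 * ((norm3 (γ n - γ (n - 1)))⁻¹ * (norm3 (γ (n + 1) - γ n))⁻¹) from by ring]
        positivity
      have h2 := mul_pos h1 (hs n)
      calc (0:ℝ) < ((norm3 (γ n - γ (n - 1)))⁻¹ * lam * ((norm3 (γ (n + 1) - γ n))⁻¹ * lam))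
            * (σ * dot3 (cross3 (Γ (n - 1)) (Γ n)) (Γ (n + 1))) := h2
        _ = σ * t := by rw [ht]; ring
    have habst : |t| = σ * t := by
      rcases hσ with h | h
      · rw [h, one_mul] at htpos ⊢
        exact abs_of_pos htpos
      · rw [h] at htpos ⊢
        rw [abs_of_neg (by linarith), neg_one_mul]
    rw [dB, hcT n, ← ht, norm3_smul, hnΓ n, habst, smul_smul]
    congr 1
    have htne : t ≠ 0 := by
      intro h
      rw [h, mul_zero] at htpos
      exact lt_irrefl _ htpos
    rcases hσ with h | h
    · rw [h]; field_simp
    · rw [h]; field_simp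
  have hN : ∀ n, dN γ n = ((σ * |lam|) * ((norm3 (γ (n + 1) - γ n))⁻¹ * lam)) •
      ((1 / lam ^ 2) • Γ (n + 1) - dot3 (Γ n) (Γ (n + 1)) • Γ n) := by
    intro n
    rw [dN, hB n, hT n, cross3_smul_left, cross3_smul_right, cross3_cross3, hr n, smul_smul]
  refine ⟨?_, ?_, ?_⟩
  · -- not collinear
    intro n hcol
    have hmem : γ n ∈ ({γ (n - 1), γ n, γ (n + 1)} : Set (Fin 3 → ℝ)) := by simp
    obtain ⟨v, hv⟩ := (collinear_iff_of_mem hmem).mp hcol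
    obtain ⟨t1, ht1⟩ := hv (γ (n + 1)) (by simp)
    obtain ⟨t2, ht2⟩ := hv (γ (n - 1)) (by simp)
    have hA : γ (n + 1) - γ n = t1 • v := by rw [ht1]; simp
    have hBv : γ (n - 1) - γ n = t2 • v := by rw [ht2]; simp
    have hz : cross3 (γ (n + 1) - γ n) (γ (n - 1) - γ n) = 0 := by
      rw [hA, hBv, cross3_smul_left, cross3_smul_right, cross3_self]
      simp
    have hγ' : γ n - γ (n - 1) = lam • cross3 (Γ n) (Γ (n - 1)) := by
      have h := hγ (n - 1)
      rwa [show n - 1 + 1 = n from by ring] at h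
    have hBv' : γ (n - 1) - γ n = (-lam) • cross3 (Γ n) (Γ (n - 1)) := by
      rw [neg_smul, ← hγ', neg_sub]
    have hnz : cross3 (γ (n + 1) - γ n) (γ (n - 1) - γ n) ≠ 0 := by
      rw [hγ n, hBv', cross3_smul_left, cross3_smul_right, cross3_cross3, dot3_cross_right]
      simp only [zero_smul, sub_zero, smul_smul]
      apply smul_ne_zero _ (hΓne n)
      rw [dot3_cross_swap13]
      exact mul_ne_zero hlam (mul_ne_zero (neg_ne_zero.mpr hlam)
        (neg_ne_zero.mpr (hsne n)))
    exact hnz hz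
  · -- angle and length
    intro n
    have h1 : (lam ^ 2 * dot3 (Γ n) (Γ (n + 1))) ^ 2 < 1 := by
      have hq : 0 < dot3 (cross3 (Γ n) (Γ (n + 1))) (cross3 (Γ n) (Γ (n + 1))) :=
        dot3_self_pos (hcne n)
      rw [lagrange, hr n, hr (n + 1)] at hq
      have h2 : lam ^ 2 * (1 / lam ^ 2) = 1 := by field_simp
      nlinarith [mul_pos (mul_pos hlam2 hlam2) hq]
    have h2 : |lam ^ 2 * dot3 (Γ n) (Γ (n + 1))| < 1 := by
      nlinarith [abs_nonneg (lam ^ 2 * dot3 (Γ n) (Γ (n + 1))),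
        sq_abs (lam ^ 2 * dot3 (Γ n) (Γ (n + 1)))]
    have hlt := abs_lt.mp h2
    refine ⟨⟨Real.arccos_pos.mpr hlt.2, lt_of_le_of_ne (Real.arccos_le_pi _)
      (fun hpi => by have := Real.arccos_eq_pi.mp hpi; linarith [hlt.1])⟩, ?_⟩
    rw [Real.sin_arccos]
    have hd : dot3 (γ (n + 1) - γ n) (γ (n + 1) - γ n)
        = (1 - (lam ^ 2 * dot3 (Γ n) (Γ (n + 1))) ^ 2) / lam ^ 2 := by
      rw [← sq_norm3, hεsq n]
      field_simp
    rw [norm3, hd, Real.sqrt_div (by nlinarith : (0:ℝ) ≤ 1 - (lam ^ 2 * dot3 (Γ n) (Γ (n + 1))) ^ 2),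
      Real.sqrt_sq_eq_abs]
  · -- torsion
    intro n
    have hepos : 0 < norm3 (γ (n + 1) - γ n) := hε n
    set e := norm3 (γ (n + 1) - γ n) with he
    set c := dot3 (Γ n) (Γ (n + 1)) with hc
    have hdot : dot3 (dB γ (n + 1)) (dN γ n) = lam * e := by
      rw [hB (n + 1), hN n, dot3_smul_left, dot3_smul_right, dot3_sub_right]
      simp only [dot3_smul_right]
      rw [hr (n + 1), dot3_comm (Γ (n + 1)) (Γ n), ← hc, ← he]
      have habs2 : |lam| * |lam| = lam ^ 2 := by
        rw [abs_mul_abs_self]; ring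
      have hee : e ^ 2 = 1 / lam ^ 2 - lam ^ 2 * c ^ 2 := hεsq n
      have hene : e ≠ 0 := hepos.ne'
      have hee2 : lam ^ 2 * e ^ 2 = 1 - lam ^ 4 * c ^ 2 := by
        rw [hee]; field_simp
      have hw : lam ^ 2 * (1 / lam ^ 2) = 1 := by field_simp
      have hei : e * e⁻¹ = 1 := mul_inv_cancel₀ hene
      linear_combination (|lam| * |lam| * lam * e⁻¹ * ((1 / lam ^ 2) * (1 / lam ^ 2) - c * c)) * hσ2
        + (lam * e⁻¹ * ((1 / lam ^ 2) * (1 / lam ^ 2) - c * c)) * habs2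
        - lam ^ 3 * e⁻¹ * (1 / lam ^ 2) * hee + lam ^ 3 * e⁻¹ * c ^ 2 * hw
        + lam ^ 3 * (1 / lam ^ 2) * e * hei + lam * e * hw
    rw [hdot]
    field_simp
end S19Aux

/-- (Discrete curves on the sphere and constant-torsion discrete space curves.)
If Γ is a discrete curve on the sphere of radius 1/|λ| with consecutive points linearly
independent and ⟨Γ_{n−1} × Γ_n, Γ_{n+1}⟩ of constant nonzero sign, then the curve γ
defined by γ_{n+1} − γ_n = λ(Γ_{n+1} × Γ_n) is a discrete space curve with
|γ_{n+1} − γ_n| = sin ξ_{n+1}/|λ| (ξ_{n+1} = arccos(λ²⟨Γ_n, Γ_{n+1}⟩) ∈ (0,π) being the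
angle between Γ_n and Γ_{n+1}) and constant torsion λ, i.e. sin ν_{n+1}/ε_n = λ. -/
theorem statement19 (lam : ℝ) (hlam : lam ≠ 0) (Γ : ℤ → Fin 3 → ℝ)
    (hsph : ∀ n, norm3 (Γ n) = 1 / |lam|)
    (hli : ∀ n, LinearIndependent ℝ ![Γ (n - 1), Γ n])
    (hsign : (∀ n, 0 < dot3 (cross3 (Γ (n - 1)) (Γ n)) (Γ (n + 1))) ∨
             (∀ n, dot3 (cross3 (Γ (n - 1)) (Γ n)) (Γ (n + 1)) < 0))
    (γ : ℤ → Fin 3 → ℝ)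
    (hγ : ∀ n, γ (n + 1) - γ n = lam • cross3 (Γ (n + 1)) (Γ n)) :
    (∀ n, ¬ Collinear ℝ ({γ (n - 1), γ n, γ (n + 1)} : Set (Fin 3 → ℝ))) ∧
    (∀ n, Real.arccos (lam ^ 2 * dot3 (Γ n) (Γ (n + 1))) ∈ Set.Ioo 0 Real.pi ∧
      norm3 (γ (n + 1) - γ n) =
        Real.sin (Real.arccos (lam ^ 2 * dot3 (Γ n) (Γ (n + 1)))) / |lam|) ∧
    (∀ n, dot3 (dB γ (n + 1)) (dN γ n) / norm3 (γ (n + 1) - γ n) = lam) := by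
  have hr : ∀ n, dot3 (Γ n) (Γ n) = 1 / lam ^ 2 := by
    intro n
    have h := S19Aux.sq_norm3 (Γ n)
    rw [hsph n] at h
    rw [← h, div_pow, one_pow, sq_abs]
  rcases hsign with h | h
  · exact S19Aux.key lam 1 hlam (Or.inl rfl) Γ hr
      (fun n => by simpa using h n) γ hγ
  · exact S19Aux.key lam (-1) hlam (Or.inr rfl) Γ hr
      (fun n => by have := h n; nlinarith) γ hγ
end
end
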